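/- arXiv:2401.17067 — 7 statements merged into one kernel-verified Lean document; each statement's English description precedes it below -/
import Mathlib

section
/- For all positive reals ξ, ρ, τ and all integers ℓ > k ≥ 1, one has λ_ℓ^{(1)} ≠ λ_k^{(2)} if and only if ξ²τ²(ℓ² − k²)² − 2ξρτ(ℓ² + k²) − 2ρ − 1 ≠ 0, where λ_k^{(1)} = ξk² + (ρ+1)/(2τ) − r_k, λ_k^{(2)} = ξk² + (ρ+1)/(2τ) + r_k, and r_k = sqrt((ξρ/τ)k² + ((ρ+1)/(2τ))²). -/
noncomputable def rk (ξ ρ τ : ℝ) (k : ℕ) : ℝ :=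
  Real.sqrt (ξ * ρ / τ * (k : ℝ) ^ 2 + ((ρ + 1) / (2 * τ)) ^ 2)

noncomputable def lam1 (ξ ρ τ : ℝ) (k : ℕ) : ℝ :=
  ξ * (k : ℝ) ^ 2 + (ρ + 1) / (2 * τ) - rk ξ ρ τ k

noncomputable def lam2 (ξ ρ τ : ℝ) (k : ℕ) : ℝ :=
  ξ * (k : ℝ) ^ 2 + (ρ + 1) / (2 * τ) + rk ξ ρ τ k

set_option maxHeartbeats 1600000 in
theorem stmt_4 (ξ ρ τ : ℝ) (hξ : 0 < ξ) (hρ : 0 < ρ) (hτ : 0 < τ)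
    (k ℓ : ℕ) (hk : 1 ≤ k) (hkl : k < ℓ) :
    lam1 ξ ρ τ ℓ ≠ lam2 ξ ρ τ k ↔
      ξ ^ 2 * τ ^ 2 * ((ℓ : ℝ) ^ 2 - (k : ℝ) ^ 2) ^ 2
        - 2 * ξ * ρ * τ * ((ℓ : ℝ) ^ 2 + (k : ℝ) ^ 2) - 2 * ρ - 1 ≠ 0 := by
  have hτ' : τ ≠ 0 := hτ.ne'
  have hk1 : (1:ℝ) ≤ (k:ℝ) := by exact_mod_cast hk
  have hlk : (k:ℝ) < (ℓ:ℝ) := by exact_mod_cast hkl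
  have hk0 : (0:ℝ) < (k:ℝ) := by linarith
  set c : ℝ := (ρ + 1) / (2 * τ) with hc
  have hc0 : 0 < c := by rw [hc]; positivity
  set R := rk ξ ρ τ ℓ with hRdef
  set S := rk ξ ρ τ k with hSdef
  have hargk : 0 < ξ * ρ / τ * (k:ℝ)^2 + c^2 := by rw [hc]; positivity
  have hargl : 0 < ξ * ρ / τ * (ℓ:ℝ)^2 + c^2 := by rw [hc]; positivity
  have hS2 : S^2 = ξ * ρ / τ * (k:ℝ)^2 + c^2 := Real.sq_sqrt hargk.le
  have hR2 : R^2 = ξ * ρ / τ * (ℓ:ℝ)^2 + c^2 := Real.sq_sqrt hargl.le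
  have hS0 : 0 ≤ S := Real.sqrt_nonneg _
  have hR0 : 0 ≤ R := Real.sqrt_nonneg _
  have hxk : 0 < ξ * ρ / τ * (k:ℝ)^2 := by positivity
  have hl0 : (0:ℝ) < (ℓ:ℝ) := hk0.trans hlk
  have hxl : 0 < ξ * ρ / τ * (ℓ:ℝ)^2 :=
    mul_pos (by positivity) (pow_pos hl0 2)
  have hSc : c < S := lt_of_pow_lt_pow_left₀ 2 hS0 (by rw [hS2]; linarith)
  have hRc : c < R := lt_of_pow_lt_pow_left₀ 2 hR0 (by rw [hR2]; linarith)
  set A : ℝ := ξ * ((ℓ:ℝ)^2 - (k:ℝ)^2) with hAdef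
  have hD : (k:ℝ)^2 < (ℓ:ℝ)^2 := by
    have := mul_self_lt_mul_self hk0.le hlk
    calc (k:ℝ)^2 = (k:ℝ)*(k:ℝ) := sq (k:ℝ) ▸ by ring
      _ < (ℓ:ℝ)*(ℓ:ℝ) := this
      _ = (ℓ:ℝ)^2 := by ring
  have hA : 0 < A := by rw [hAdef]; exact mul_pos hξ (sub_pos.mpr hD)
  set E : ℝ := ξ ^ 2 * τ ^ 2 * ((ℓ : ℝ) ^ 2 - (k : ℝ) ^ 2) ^ 2
        - 2 * ξ * ρ * τ * ((ℓ : ℝ) ^ 2 + (k : ℝ) ^ 2) - 2 * ρ - 1 with hEdef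
  have hid : E * A ^ 2 = τ ^ 2 * ((A^2 - R^2 - S^2)^2 - 4 * R^2 * S^2) := by
    rw [hR2, hS2, hEdef, hAdef, hc]
    field_simp
    ring
  have key : A = R + S ↔ E = 0 := by
    constructor
    · intro h
      have hz : (A^2 - R^2 - S^2)^2 - 4 * R^2 * S^2 = 0 := by rw [h]; ring
      have : E * A ^ 2 = 0 := by rw [hid, hz]; ring
      rcases mul_eq_zero.mp this with h' | h'
      · exact h'
      · exact absurd h' (pow_ne_zero 2 hA.ne')
    · intro h
      have hz : (A^2 - R^2 - S^2)^2 - 4 * R^2 * S^2 = 0 := by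
        have : τ ^ 2 * ((A^2 - R^2 - S^2)^2 - 4 * R^2 * S^2) = 0 := by
          rw [← hid, h]; ring
        have hτ2 : (τ:ℝ)^2 ≠ 0 := by positivity
        exact (mul_eq_zero.mp this).resolve_left hτ2
      have hfac : (A^2 - (R+S)^2) * (A^2 - (R-S)^2) = 0 := by
        linear_combination hz
      have hprod : (R - S) * (R + S) = ρ / τ * A := by
        rw [hAdef]
        linear_combination hR2 - hS2
      have hsum : ρ / τ < R + S := by
        have h2c : 2 * c = (ρ + 1) / τ := by rw [hc]; field_simp
        have : ρ / τ < 2 * c := by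
          rw [h2c]
          gcongr
          linarith
        linarith
      have hR2S2 : S^2 < R^2 := by
        rw [hR2, hS2]
        have := mul_lt_mul_of_pos_left hD (show 0 < ξ*ρ/τ by positivity)
        linarith
      have hRS : S < R := lt_of_pow_lt_pow_left₀ 2 hR0 hR2S2
      have hRSpos : 0 < R + S := by linarith
      have hdiff : R - S < A := by
        have hlt : (R - S) * (R + S) < A * (R + S) := by
          rw [hprod]
          calc ρ / τ * A < (R + S) * A := by
                exact mul_lt_mul_of_pos_right hsum hA
            _ = A * (R + S) := by ring
        exact lt_of_mul_lt_mul_right hlt hRSpos.le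
      have hpos2 : 0 < A^2 - (R-S)^2 := by
        have h1 : 0 < A - (R - S) := by linarith
        have h2 : 0 < A + (R - S) := by linarith
        calc (0:ℝ) < (A - (R-S)) * (A + (R-S)) := mul_pos h1 h2
          _ = A^2 - (R-S)^2 := by ring
      have h2 : A^2 = (R+S)^2 := by
        rcases mul_eq_zero.mp hfac with h' | h'
        · linarith
        · exact absurd h' hpos2.ne'
      have h3 : (A - (R+S)) * (A + (R+S)) = 0 := by linear_combination h2
      rcases mul_eq_zero.mp h3 with h' | h'
      · linarith [sub_eq_zero.mp h']
      · linarith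
  have heq : lam1 ξ ρ τ ℓ = lam2 ξ ρ τ k ↔ A = R + S := by
    rw [lam1, lam2, ← hRdef, ← hSdef, ← hc, hAdef]
    constructor <;> intro h <;> linear_combination h
  rw [ne_eq, ne_eq, not_iff_not, heq, key]
end

section
/- Suppose ξ, ρ, τ > 0 and ξ = (1/j²)(ρ/τ) for some integer j ≥ 1. Then for every k ≥ 1 one has λ_{k+j}^{(1)} < λ_k^{(2)}, and the difference λ_k^{(2)} − λ_{k+j}^{(1)} tends to 0 as k → ∞; consequently inf over distinct pairs of eigenvalues of |λ_k^{(2)} − λ_ℓ^{(1)}| is 0. -/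
lemma sqrt_lb (a c : ℝ) (ha : 0 ≤ a) (hc : 0 < c) :
    a ≤ Real.sqrt (a ^ 2 + c ^ 2) := by
  have h := Real.sqrt_le_sqrt (show a ^ 2 ≤ a ^ 2 + c ^ 2 by nlinarith)
  rwa [Real.sqrt_sq ha] at h

lemma sqrt_lb' (a c : ℝ) (ha : 0 ≤ a) (hc : 0 < c) :
    a < Real.sqrt (a ^ 2 + c ^ 2) := by
  calc a = Real.sqrt (a ^ 2) := by rw [Real.sqrt_sq ha]
    _ < Real.sqrt (a ^ 2 + c ^ 2) := Real.sqrt_lt_sqrt (by positivity) (by nlinarith)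

lemma sqrt_ub (a c : ℝ) (ha : 0 < a) (hc : 0 < c) :
    Real.sqrt (a ^ 2 + c ^ 2) ≤ a + c ^ 2 / (2 * a) := by
  rw [show a + c ^ 2 / (2 * a) = Real.sqrt ((a + c ^ 2 / (2 * a)) ^ 2) by
    rw [Real.sqrt_sq (by positivity)]]
  apply Real.sqrt_le_sqrt
  have h : 2 * a * (c ^ 2 / (2 * a)) = c ^ 2 := by field_simp
  nlinarith [sq_nonneg (c ^ 2 / (2 * a))]

theorem stmt_6 (ξ ρ τ : ℝ) (hξ : 0 < ξ) (hρ : 0 < ρ) (hτ : 0 < τ)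
    (j : ℕ) (hj : 1 ≤ j) (hres : ξ = ρ / (τ * (j : ℝ) ^ 2)) :
    (∀ k : ℕ, 1 ≤ k → lam1 ξ ρ τ (k + j) < lam2 ξ ρ τ k) ∧
    Filter.Tendsto (fun k : ℕ => lam2 ξ ρ τ k - lam1 ξ ρ τ (k + j))
      Filter.atTop (nhds 0) ∧
    sInf {x : ℝ | ∃ k ℓ : ℕ, 1 ≤ k ∧ 1 ≤ ℓ ∧ lam2 ξ ρ τ k ≠ lam1 ξ ρ τ ℓ ∧
      x = |lam2 ξ ρ τ k - lam1 ξ ρ τ ℓ|} = 0 := by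
  have hj' : (0:ℝ) < (j:ℝ) := by exact_mod_cast hj
  set c : ℝ := (ρ + 1) / (2 * τ) with hc
  have hc0 : 0 < c := by positivity
  have hρτ : ρ = ξ * τ * (j : ℝ) ^ 2 := by
    have hne : τ * (j : ℝ) ^ 2 ≠ 0 := by positivity
    field_simp at hres
    linarith
  have hξρ : ξ * ρ / τ = (ξ * (j : ℝ)) ^ 2 := by
    rw [hρτ]; field_simp
  have hrk : ∀ k : ℕ, rk ξ ρ τ k = Real.sqrt ((ξ * j * k) ^ 2 + c ^ 2) := by
    intro k
    unfold rk
    rw [hc, hξρ]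
    congr 1
    ring
  have hd : ∀ k : ℕ, lam2 ξ ρ τ k - lam1 ξ ρ τ (k + j) =
      (rk ξ ρ τ k - ξ * j * k) + (rk ξ ρ τ (k + j) - ξ * j * (k + j)) := by
    intro k
    unfold lam1 lam2
    push_cast
    ring
  -- nonnegativity for all k
  have hpos0 : ∀ k : ℕ, 0 ≤ lam2 ξ ρ τ k - lam1 ξ ρ τ (k + j) := by
    intro k
    rw [hd k]
    have h1 := sqrt_lb (ξ * j * k) c (by positivity) hc0
    have h2 := sqrt_lb (ξ * j * (k + j)) c (by positivity) hc0
    rw [hrk k, hrk (k + j)]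
    push_cast
    push_cast at h2
    linarith
  -- strict positivity for k ≥ 1
  have hpos : ∀ k : ℕ, 1 ≤ k → 0 < lam2 ξ ρ τ k - lam1 ξ ρ τ (k + j) := by
    intro k hk
    rw [hd k]
    have hk' : (1:ℝ) ≤ (k:ℝ) := by exact_mod_cast hk
    have h1 := sqrt_lb' (ξ * j * k) c (by positivity) hc0
    have h2 := sqrt_lb (ξ * j * (k + j)) c (by positivity) hc0
    rw [hrk k, hrk (k + j)]
    push_cast
    push_cast at h2
    linarith
  have htendF : Filter.Tendsto (fun k : ℕ => lam2 ξ ρ τ k - lam1 ξ ρ τ (k + j))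
      Filter.atTop (nhds 0) := by
    have hub : ∀ k : ℕ, 1 ≤ k →
        lam2 ξ ρ τ k - lam1 ξ ρ τ (k + j) ≤ (c ^ 2 / (ξ * j)) * (1 / k) := by
      intro k hk
      have hk' : (1:ℝ) ≤ (k:ℝ) := by exact_mod_cast hk
      have hk0 : (0:ℝ) < (k:ℝ) := by linarith
      have ha : (0:ℝ) < ξ * j * k := by positivity
      have ha' : (0:ℝ) < ξ * j * ((k:ℝ) + j) := by positivity
      have h1 := sqrt_ub (ξ * j * k) c ha hc0
      have h2 := sqrt_ub (ξ * j * ((k:ℝ) + j)) c ha' hc0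
      have hle : c ^ 2 / (2 * (ξ * j * ((k:ℝ) + j))) ≤ c ^ 2 / (2 * (ξ * j * k)) := by
        apply div_le_div_of_nonneg_left (by positivity) (by positivity)
        nlinarith
      have heq : c ^ 2 / (2 * (ξ * j * k)) + c ^ 2 / (2 * (ξ * j * k))
          = (c ^ 2 / (ξ * j)) * (1 / k) := by
        field_simp
        ring
      rw [hd k, hrk k, hrk (k + j)]
      push_cast
      linarith
    have htend : Filter.Tendsto (fun k : ℕ => (c ^ 2 / (ξ * j)) * (1 / (k:ℝ)))
        Filter.atTop (nhds 0) := by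
      have := tendsto_one_div_atTop_nhds_zero_nat (𝕜 := ℝ)
      simpa using this.const_mul (c ^ 2 / (ξ * j))
    refine tendsto_of_tendsto_of_tendsto_of_le_of_le' tendsto_const_nhds htend ?_ ?_
    · exact Filter.Eventually.of_forall hpos0
    · filter_upwards [Filter.eventually_ge_atTop 1] with k hk using hub k hk
  refine ⟨fun k hk => by linarith [hpos k hk], htendF, ?_⟩
  set S := {x : ℝ | ∃ k ℓ : ℕ, 1 ≤ k ∧ 1 ≤ ℓ ∧ lam2 ξ ρ τ k ≠ lam1 ξ ρ τ ℓ ∧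
    x = |lam2 ξ ρ τ k - lam1 ξ ρ τ ℓ|} with hS
  have hSnn : ∀ x ∈ S, (0:ℝ) ≤ x := by
    rintro x ⟨k, l, -, -, -, rfl⟩
    exact abs_nonneg _
  have hbdd : BddBelow S := ⟨0, fun x hx => hSnn x hx⟩
  have hmem : ∀ k : ℕ, 1 ≤ k → lam2 ξ ρ τ k - lam1 ξ ρ τ (k + j) ∈ S := by
    intro k hk
    refine ⟨k, k + j, hk, le_trans hj (Nat.le_add_left j k), ?_, ?_⟩
    · exact (sub_pos.mp (hpos k hk)).ne'
    · exact (abs_of_pos (hpos k hk)).symm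
  have h1 : sInf S ≤ 0 := by
    refine ge_of_tendsto htendF ?_
    filter_upwards [Filter.eventually_ge_atTop 1] with k hk
    exact csInf_le hbdd (hmem k hk)
  have h2 : 0 ≤ sInf S := Real.sInf_nonneg hSnn
  linarith
end

section
/- For all positive reals ξ, ρ, τ, each eigenvalue can be written λ_k^{(1)} = ξk² + (ρ+1)/(2τ) − sqrt(ξρ/τ)·k − ε_k/k and λ_k^{(2)} = ξk² + (ρ+1)/(2τ) + sqrt(ξρ/τ)·k + ε_k/k, where (ε_k)_{k≥1} is a positive increasing sequence converging to (1/2)((ρ+1)/(2τ))² · sqrt(τ/(ξρ)). -/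
lemma my_aux (a b : ℝ) (ha : 0 < a) (hb : 0 < b) (k : ℕ) (hk : 1 ≤ k) :
    Real.sqrt (a * (k:ℝ) ^ 2 + b)
      = Real.sqrt a * (k:ℝ) + (b / (Real.sqrt (a + b / (k:ℝ) ^ 2) + Real.sqrt a)) / (k:ℝ) := by
  have hk0 : (0:ℝ) < (k:ℝ) := by exact_mod_cast hk
  have hsa : (0:ℝ) < Real.sqrt a := Real.sqrt_pos.2 ha
  have hsum : 0 < a * (k:ℝ) ^ 2 + b := by positivity
  have hr : 0 < Real.sqrt (a * (k:ℝ) ^ 2 + b) := Real.sqrt_pos.2 hsum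
  have hkey : Real.sqrt (a * (k:ℝ) ^ 2 + b) = (k:ℝ) * Real.sqrt (a + b / (k:ℝ) ^ 2) := by
    rw [show a * (k:ℝ) ^ 2 + b = (k:ℝ)^2 * (a + b / (k:ℝ)^2) by field_simp,
      Real.sqrt_mul (by positivity), Real.sqrt_sq hk0.le]
  have hsq : Real.sqrt (a * (k:ℝ) ^ 2 + b) ^ 2 = a * (k:ℝ) ^ 2 + b :=
    Real.sq_sqrt hsum.le
  have hsa2 : Real.sqrt a ^ 2 = a := Real.sq_sqrt ha.le
  have hden : 0 < Real.sqrt (a * (k:ℝ) ^ 2 + b) + Real.sqrt a * (k:ℝ) := by positivity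
  have hb' : (Real.sqrt (a * (k:ℝ) ^ 2 + b) - Real.sqrt a * (k:ℝ))
      * (Real.sqrt (a * (k:ℝ) ^ 2 + b) + Real.sqrt a * (k:ℝ)) = b := by
    ring_nf
    nlinarith [hsq, hsa2]
  have e1 : b / (Real.sqrt (a + b / (k:ℝ) ^ 2) + Real.sqrt a) / (k:ℝ)
      = b / (Real.sqrt (a * (k:ℝ) ^ 2 + b) + Real.sqrt a * (k:ℝ)) := by
    rw [hkey]; field_simp
  have e2 : b / (Real.sqrt (a * (k:ℝ) ^ 2 + b) + Real.sqrt a * (k:ℝ))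
      = Real.sqrt (a * (k:ℝ) ^ 2 + b) - Real.sqrt a * (k:ℝ) := by
    rw [div_eq_iff hden.ne']; linarith [hb']
  rw [e1, e2]; ring

theorem stmt_7 (ξ ρ τ : ℝ) (hξ : 0 < ξ) (hρ : 0 < ρ) (hτ : 0 < τ) :
    ∃ ε : ℕ → ℝ,
      (∀ k : ℕ, 1 ≤ k → 0 < ε k) ∧
      (∀ k : ℕ, 1 ≤ k → ε k < ε (k + 1)) ∧
      Filter.Tendsto ε Filter.atTop
        (nhds ((1 / 2) * ((ρ + 1) / (2 * τ)) ^ 2 * Real.sqrt (τ / (ξ * ρ)))) ∧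
      (∀ k : ℕ, 1 ≤ k →
        lam1 ξ ρ τ k = ξ * (k : ℝ) ^ 2 + (ρ + 1) / (2 * τ)
          - Real.sqrt (ξ * ρ / τ) * (k : ℝ) - ε k / (k : ℝ) ∧
        lam2 ξ ρ τ k = ξ * (k : ℝ) ^ 2 + (ρ + 1) / (2 * τ)
          + Real.sqrt (ξ * ρ / τ) * (k : ℝ) + ε k / (k : ℝ)) := by
  set a := ξ * ρ / τ with ha'
  set b := ((ρ + 1) / (2 * τ)) ^ 2 with hb'
  have ha : 0 < a := by rw [ha']; positivity
  have hb : 0 < b := by rw [hb']; positivity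
  have hsa : (0:ℝ) < Real.sqrt a := Real.sqrt_pos.2 ha
  refine ⟨fun k => b / (Real.sqrt (a + b / (k:ℝ) ^ 2) + Real.sqrt a), ?_, ?_, ?_, ?_⟩
  · intro k hk
    have : 0 < Real.sqrt (a + b / (k:ℝ) ^ 2) + Real.sqrt a := by positivity
    exact div_pos hb this
  · intro k hk
    have hk0 : (0:ℝ) < (k:ℝ) := by exact_mod_cast hk
    have hstep : Real.sqrt (a + b / ((k:ℝ)+1) ^ 2) < Real.sqrt (a + b / (k:ℝ) ^ 2) := by
      apply Real.sqrt_lt_sqrt (by positivity)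
      have : b / ((k:ℝ)+1) ^ 2 < b / (k:ℝ) ^ 2 := by
        apply div_lt_div_of_pos_left hb (by positivity)
        nlinarith
      linarith
    have hden : 0 < Real.sqrt (a + b / ((k:ℝ)+1) ^ 2) + Real.sqrt a := by positivity
    have := div_lt_div_of_pos_left hb hden (by linarith :
      Real.sqrt (a + b / ((k:ℝ)+1) ^ 2) + Real.sqrt a
        < Real.sqrt (a + b / (k:ℝ) ^ 2) + Real.sqrt a)
    simpa [Nat.cast_add] using this
  · have h2 : Filter.Tendsto (fun k : ℕ => (k:ℝ) ^ 2) Filter.atTop Filter.atTop := by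
      apply Filter.tendsto_atTop_mono (fun k : ℕ => ?_) tendsto_natCast_atTop_atTop
      exact_mod_cast Nat.le_self_pow two_ne_zero k
    have hlim0 : Filter.Tendsto (fun k : ℕ => b / (k:ℝ) ^ 2) Filter.atTop (nhds 0) :=
      Filter.Tendsto.div_atTop tendsto_const_nhds h2
    have hsqrtlim : Filter.Tendsto (fun k : ℕ => Real.sqrt (a + b / (k:ℝ) ^ 2))
        Filter.atTop (nhds (Real.sqrt a)) := by
      have := (Real.continuous_sqrt.tendsto a).comp
        (by simpa using tendsto_const_nhds.add hlim0 :
          Filter.Tendsto (fun k : ℕ => a + b / (k:ℝ) ^ 2) Filter.atTop (nhds a))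
      exact this
    have hfin : Filter.Tendsto (fun k : ℕ => b / (Real.sqrt (a + b / (k:ℝ) ^ 2) + Real.sqrt a))
        Filter.atTop (nhds (b / (Real.sqrt a + Real.sqrt a))) :=
      tendsto_const_nhds.div (hsqrtlim.add tendsto_const_nhds) (by positivity)
    have heq : b / (Real.sqrt a + Real.sqrt a) = 1 / 2 * b * Real.sqrt (τ / (ξ * ρ)) := by
      have h1 : τ / (ξ * ρ) = a⁻¹ := by rw [ha']; field_simp
      have h3 : (Real.sqrt a)⁻¹ * Real.sqrt a = 1 := inv_mul_cancel₀ hsa.ne'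
      rw [h1, Real.sqrt_inv, div_eq_iff (show Real.sqrt a + Real.sqrt a ≠ 0 by positivity)]
      linear_combination (-b) * h3
    rw [← heq]
    exact hfin
  · intro k hk
    have hk0 : (0:ℝ) < (k:ℝ) := by exact_mod_cast hk
    have hrk : rk ξ ρ τ k = Real.sqrt a * (k:ℝ)
        + (b / (Real.sqrt (a + b / (k:ℝ) ^ 2) + Real.sqrt a)) / (k:ℝ) := by
      rw [rk, ← ha', ← hb']
      exact my_aux a b ha hb k hk
    constructor
    · rw [lam1, hrk]; ring
    · rw [lam2, hrk]; ring
end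

section
/- Let ξ, ρ, τ > 0 satisfy ξ ≠ ρ/(j²τ) for all integers j ≥ 1. Then there exist an integer k₁ ≥ 1 (depending only on ξ, ρ, τ) such that for all integers k, ℓ ≥ 1 with |k − ℓ| ≥ k₁, one has |λ_k^{(1)} − λ_ℓ^{(1)}| ≥ (ξ/2)|k² − ℓ²|, |λ_k^{(2)} − λ_ℓ^{(2)}| ≥ (ξ/2)|k² − ℓ²|, and |λ_k^{(2)} − λ_ℓ^{(1)}| ≥ (ξ/2)|k² − ℓ²|. -/
set_option maxHeartbeats 1000000 in
theorem stmt_9 (ξ ρ τ : ℝ) (hξ : 0 < ξ) (hρ : 0 < ρ) (hτ : 0 < τ)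
    (hH1 : ∀ j : ℕ, 1 ≤ j → ξ ≠ ρ / ((j : ℝ) ^ 2 * τ)) :
    ∃ k₁ : ℕ, 1 ≤ k₁ ∧
      ∀ k ℓ : ℕ, 1 ≤ k → 1 ≤ ℓ → (k₁ : ℝ) ≤ |(k : ℝ) - (ℓ : ℝ)| →
        |lam1 ξ ρ τ k - lam1 ξ ρ τ ℓ| ≥ ξ / 2 * |(k : ℝ) ^ 2 - (ℓ : ℝ) ^ 2| ∧
        |lam2 ξ ρ τ k - lam2 ξ ρ τ ℓ| ≥ ξ / 2 * |(k : ℝ) ^ 2 - (ℓ : ℝ) ^ 2| ∧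
        |lam2 ξ ρ τ k - lam1 ξ ρ τ ℓ| ≥ ξ / 2 * |(k : ℝ) ^ 2 - (ℓ : ℝ) ^ 2| := by
  set a : ℝ := ξ * ρ / τ with ha_def
  have ha : 0 < a := by positivity
  set b : ℝ := (ρ + 1) / (2 * τ) with hb_def
  have hb : 0 < b := by positivity
  set s : ℝ := Real.sqrt a with hs_def
  have hs : 0 < s := Real.sqrt_pos.mpr ha
  have hs2 : s ^ 2 = a := Real.sq_sqrt ha.le
  -- basic facts about rk
  have hrk_sq : ∀ k : ℕ, (rk ξ ρ τ k) ^ 2 = a * (k : ℝ) ^ 2 + b ^ 2 := by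
    intro k
    have h0 : (0:ℝ) ≤ a * (k : ℝ) ^ 2 + b ^ 2 := by positivity
    simpa [rk, ← ha_def, ← hb_def] using Real.sq_sqrt h0
  have hrk_nonneg : ∀ k : ℕ, 0 ≤ rk ξ ρ τ k := fun k => Real.sqrt_nonneg _
  have hrk_low : ∀ k : ℕ, s * (k : ℝ) ≤ rk ξ ρ τ k := by
    intro k
    have hkc : (0:ℝ) ≤ (k:ℝ) := Nat.cast_nonneg k
    have h1 : Real.sqrt (a * (k:ℝ) ^ 2) ≤ rk ξ ρ τ k := by
      apply Real.sqrt_le_sqrt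
      have : (0:ℝ) ≤ b ^ 2 := sq_nonneg b
      simp only [← ha_def, ← hb_def]
      linarith
    have h2 : Real.sqrt (a * (k:ℝ) ^ 2) = s * (k:ℝ) := by
      rw [Real.sqrt_mul ha.le, Real.sqrt_sq hkc]
    rw [← h2]; exact h1
  have hrk_up : ∀ k : ℕ, rk ξ ρ τ k ≤ s * (k : ℝ) + b := by
    intro k
    have hkc : (0:ℝ) ≤ (k:ℝ) := Nat.cast_nonneg k
    have hsb : (0:ℝ) ≤ s * (k:ℝ) + b := by positivity
    have h1 : rk ξ ρ τ k ≤ Real.sqrt ((s * (k:ℝ) + b) ^ 2) := by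
      apply Real.sqrt_le_sqrt
      simp only [← ha_def, ← hb_def]
      nlinarith [mul_nonneg hs.le hkc, hb.le]
    rwa [Real.sqrt_sq hsb] at h1
  -- the threshold
  set C : ℝ := 2 * (s + 2 * b) / ξ with hC_def
  refine ⟨⌈C⌉₊ + 1, Nat.le_add_left 1 _, ?_⟩
  have hCk : C ≤ ((⌈C⌉₊ + 1 : ℕ) : ℝ) := by
    push_cast
    have := Nat.le_ceil C
    linarith
  intro k ℓ hk hℓ hkl
  set N : ℝ := ((⌈C⌉₊ + 1 : ℕ) : ℝ) with hN_def
  set K := (k : ℝ) with hK_def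
  set L := (ℓ : ℝ) with hL_def
  have hK1 : (1:ℝ) ≤ K := by rw [hK_def]; exact_mod_cast hk
  have hL1 : (1:ℝ) ≤ L := by rw [hL_def]; exact_mod_cast hℓ
  have habsKL : |K - L| ≤ K + L := by
    rw [abs_le]; constructor <;> linarith
  have hsum : N ≤ K + L := le_trans hkl habsKL
  have hξC : ξ * C = 2 * (s + 2 * b) := by
    rw [hC_def]; field_simp
  have hξN : 2 * (s + 2 * b) ≤ ξ * N := by
    have := mul_le_mul_of_nonneg_left hCk hξ.le
    linarith
  set Rk := rk ξ ρ τ k with hRk_def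
  set Rl := rk ξ ρ τ ℓ with hRl_def
  have hRkl : Rk ^ 2 = a * K ^ 2 + b ^ 2 := hrk_sq k
  have hRll : Rl ^ 2 = a * L ^ 2 + b ^ 2 := hrk_sq ℓ
  have hRk0 : 0 ≤ Rk := hrk_nonneg k
  have hRl0 : 0 ≤ Rl := hrk_nonneg ℓ
  have hRkL : s * K ≤ Rk := hrk_low k
  have hRlL : s * L ≤ Rl := hrk_low ℓ
  have hRkU : Rk ≤ s * K + b := hrk_up k
  have hRlU : Rl ≤ s * L + b := hrk_up ℓ
  have hprod : (Rk - Rl) * (Rk + Rl) = a * (K ^ 2 - L ^ 2) := by linear_combination hRkl - hRll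
  -- Rk + Rl is large
  have hRsum : 2 * a ≤ ξ * (Rk + Rl) := by
    have h1 : s * (K + L) ≤ Rk + Rl := by linarith
    have h2 : 2 * s ≤ ξ * (K + L) := by
      have := mul_le_mul_of_nonneg_left hsum hξ.le
      linarith
    have h3 := mul_le_mul_of_nonneg_left h2 hs.le
    have h4 := mul_le_mul_of_nonneg_left h1 hξ.le
    linarith [hs2.symm.le, hs2.le, h3, h4]
  -- key bound on |Rk - Rl|
  have hd : |Rk - Rl| ≤ ξ / 2 * |K ^ 2 - L ^ 2| := by
    have habs : |Rk - Rl| * (Rk + Rl) = a * |K ^ 2 - L ^ 2| := by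
      have h1 := congrArg abs hprod
      rw [abs_mul, abs_mul, abs_of_nonneg (by linarith : (0:ℝ) ≤ Rk + Rl),
        abs_of_pos ha] at h1
      exact h1
    have h4 : |Rk - Rl| * (2 * a) ≤ |Rk - Rl| * (ξ * (Rk + Rl)) :=
      mul_le_mul_of_nonneg_left hRsum (abs_nonneg _)
    have h5 : |Rk - Rl| * (ξ * (Rk + Rl)) = ξ * (a * |K ^ 2 - L ^ 2|) := by
      rw [← habs]; ring
    rw [h5] at h4
    nlinarith [ha]
  obtain ⟨hd1, hd2⟩ := abs_le.mp hd
  have e1 : lam1 ξ ρ τ k - lam1 ξ ρ τ ℓ = ξ * (K ^ 2 - L ^ 2) - (Rk - Rl) := by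
    simp only [lam1, ← hRk_def, ← hRl_def, ← hK_def, ← hL_def]; ring
  have e2 : lam2 ξ ρ τ k - lam2 ξ ρ τ ℓ = ξ * (K ^ 2 - L ^ 2) + (Rk - Rl) := by
    simp only [lam2, ← hRk_def, ← hRl_def, ← hK_def, ← hL_def]; ring
  have e3 : lam2 ξ ρ τ k - lam1 ξ ρ τ ℓ = ξ * (K ^ 2 - L ^ 2) + (Rk + Rl) := by
    simp only [lam1, lam2, ← hRk_def, ← hRl_def, ← hK_def, ← hL_def]; ring
  refine ⟨?_, ?_, ?_⟩
  · rw [e1, ge_iff_le, le_abs]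
    rcases abs_cases (K ^ 2 - L ^ 2) with ⟨h, h'⟩ | ⟨h, h'⟩
    · left; rw [h] at hd2 ⊢; linarith
    · right; rw [h] at hd1 ⊢; linarith
  · rw [e2, ge_iff_le, le_abs]
    rcases abs_cases (K ^ 2 - L ^ 2) with ⟨h, h'⟩ | ⟨h, h'⟩
    · left; rw [h] at hd1 ⊢; linarith
    · right; rw [h] at hd2 ⊢; linarith
  · rw [e3, ge_iff_le, le_abs]
    rcases le_or_gt L K with hLK | hKL
    · have hΔ : 0 ≤ K ^ 2 - L ^ 2 := by
        have h := mul_nonneg (by linarith : (0:ℝ) ≤ K - L) (by linarith : (0:ℝ) ≤ K + L)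
        linarith only [h]
      left
      rw [abs_of_nonneg hΔ]
      have h := mul_nonneg hξ.le hΔ
      linarith only [h, hRk0, hRl0]
    · have hΔ : K ^ 2 - L ^ 2 < 0 := by
        have h := mul_pos (by linarith : (0:ℝ) < L - K) (by linarith : (0:ℝ) < L + K)
        linarith only [h]
      have hklLK : N ≤ L - K := by
        rwa [abs_of_neg (by linarith : K - L < 0), neg_sub] at hkl
      right
      rw [abs_of_neg hΔ]
      -- need Rk + Rl ≤ ξ/2 * (L^2 - K^2)
      have h1 : N * (K + L) ≤ (L - K) * (K + L) :=
        mul_le_mul_of_nonneg_right hklLK (by linarith)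
      have h2 : 2 * (s + 2 * b) * (K + L) ≤ ξ * (N * (K + L)) := by
        have := mul_le_mul_of_nonneg_right hξN (by linarith : (0:ℝ) ≤ K + L)
        linarith
      have h3 : Rk + Rl ≤ s * (K + L) + 2 * b := by linarith
      have hb4 : 4 * b ≤ 2 * b * (K + L) := by
        have := mul_le_mul_of_nonneg_left (show (2:ℝ) ≤ K + L by linarith)
          (by linarith : (0:ℝ) ≤ 2 * b)
        linarith
      have h6 := mul_le_mul_of_nonneg_left h1 hξ.le
      linarith only [h2, h3, hb4, h6, hb.le]
end

section
/- For all positive reals ξ, ρ, τ and every r ≥ 0, the number n₁ of integers k ≥ 1 with λ_k^{(1)} ≤ r satisfies sqrt(r)/sqrt(ξ) − 1 < n₁ ≤ sqrt(r)/sqrt(ξ) + sqrt(ρ/(ξτ)). -/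
lemma lam1_le (ξ ρ τ : ℝ) (hξ : 0 < ξ) (hρ : 0 < ρ) (hτ : 0 < τ) (k : ℕ) :
    lam1 ξ ρ τ k ≤ ξ * (k : ℝ) ^ 2 := by
  have hc : 0 ≤ (ρ + 1) / (2 * τ) := by positivity
  have h1 : (ρ + 1) / (2 * τ) ≤ rk ξ ρ τ k := by
    have : (ρ + 1) / (2 * τ) = Real.sqrt (((ρ + 1) / (2 * τ)) ^ 2) := by
      rw [Real.sqrt_sq hc]
    rw [this]
    apply Real.sqrt_le_sqrt
    have : 0 ≤ ξ * ρ / τ * (k : ℝ) ^ 2 := by positivity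
    linarith
  unfold lam1
  linarith

lemma my_sqrt_add (x y : ℝ) (hx : 0 ≤ x) (hy : 0 ≤ y) :
    Real.sqrt (x + y) ≤ Real.sqrt x + Real.sqrt y := by
  have h : x + y ≤ (Real.sqrt x + Real.sqrt y) ^ 2 := by
    have h1 := Real.sq_sqrt hx
    have h2 := Real.sq_sqrt hy
    nlinarith [mul_nonneg (Real.sqrt_nonneg x) (Real.sqrt_nonneg y)]
  have := Real.sqrt_le_sqrt h
  rwa [Real.sqrt_sq (by positivity)] at this

lemma lam1_ge (ξ ρ τ : ℝ) (hξ : 0 < ξ) (hρ : 0 < ρ) (hτ : 0 < τ) (k : ℕ) :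
    ξ * (k : ℝ) ^ 2 - ξ * Real.sqrt (ρ / (ξ * τ)) * k ≤ lam1 ξ ρ τ k := by
  have hk : (0:ℝ) ≤ k := Nat.cast_nonneg k
  have hsb : ξ * Real.sqrt (ρ / (ξ * τ)) = Real.sqrt (ξ * ρ / τ) := by
    rw [show ξ * ρ / τ = ξ ^ 2 * (ρ / (ξ * τ)) by field_simp,
      Real.sqrt_mul (by positivity), Real.sqrt_sq hξ.le]
  have h2 : rk ξ ρ τ k ≤ ξ * Real.sqrt (ρ / (ξ * τ)) * k + (ρ + 1) / (2 * τ) := by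
    unfold rk
    have h3 := my_sqrt_add (ξ * ρ / τ * (k : ℝ) ^ 2) (((ρ + 1) / (2 * τ)) ^ 2)
      (by positivity) (by positivity)
    have h4 : Real.sqrt (ξ * ρ / τ * (k : ℝ) ^ 2) = ξ * Real.sqrt (ρ / (ξ * τ)) * k := by
      rw [Real.sqrt_mul (by positivity), Real.sqrt_sq hk, hsb]
    have h5 : Real.sqrt ((((ρ + 1) / (2 * τ)) ^ 2)) = (ρ + 1) / (2 * τ) :=
      Real.sqrt_sq (by positivity)
    rw [h4, h5] at h3
    exact h3
  unfold lam1
  linarith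

theorem stmt_11 (ξ ρ τ : ℝ) (hξ : 0 < ξ) (hρ : 0 < ρ) (hτ : 0 < τ)
    (r : ℝ) (hr : 0 ≤ r) :
    Real.sqrt r / Real.sqrt ξ - 1
        < (({k : ℕ | 1 ≤ k ∧ lam1 ξ ρ τ k ≤ r}).ncard : ℝ) ∧
    (({k : ℕ | 1 ≤ k ∧ lam1 ξ ρ τ k ≤ r}).ncard : ℝ)
        ≤ Real.sqrt r / Real.sqrt ξ + Real.sqrt (ρ / (ξ * τ)) := by
  set S := {k : ℕ | 1 ≤ k ∧ lam1 ξ ρ τ k ≤ r} with hS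
  set s := Real.sqrt (r / ξ) with hs
  set b := Real.sqrt (ρ / (ξ * τ)) with hb
  have hsq : Real.sqrt r / Real.sqrt ξ = s := (Real.sqrt_div hr ξ).symm
  have hs0 : 0 ≤ s := Real.sqrt_nonneg _
  have hb0 : 0 ≤ b := Real.sqrt_nonneg _
  have hs2 : s ^ 2 = r / ξ := Real.sq_sqrt (by positivity)
  -- upper bound on members of S
  have hmem : ∀ k ∈ S, (k : ℝ) ≤ s + b := by
    intro k hk
    obtain ⟨hk1, hk2⟩ := hk
    have hge := lam1_ge ξ ρ τ hξ hρ hτ k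
    have hkr : ξ * (k : ℝ) ^ 2 - ξ * b * k ≤ r := by linarith
    by_contra hcon
    push_neg at hcon
    have hkpos : (0:ℝ) ≤ k := Nat.cast_nonneg k
    have hrs : r = ξ * s ^ 2 := by rw [hs2]; field_simp
    have hA : s < (k:ℝ) - b := by linarith
    have hB : s < (k:ℝ) := by linarith
    have h1 : s * s < (k:ℝ) * ((k:ℝ) - b) :=
      lt_of_le_of_lt (mul_le_mul_of_nonneg_left hA.le hs0)
        (mul_lt_mul_of_pos_right hB (by linarith))
    nlinarith [mul_lt_mul_of_pos_left h1 hξ]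
  -- S is finite, contained in Icc 1 N
  have hsub : S ⊆ Set.Icc 1 ⌊s + b⌋₊ := by
    intro k hk
    exact ⟨hk.1, Nat.le_floor (hmem k hk)⟩
  have hfin : S.Finite := Set.Finite.subset (Set.finite_Icc _ _) hsub
  -- lower: Icc 1 ⌊s⌋₊ ⊆ S
  have hsub2 : Set.Icc 1 ⌊s⌋₊ ⊆ S := by
    intro k hk
    obtain ⟨hk1, hk2⟩ := hk
    refine ⟨hk1, ?_⟩
    have hks : (k : ℝ) ≤ s := le_trans (Nat.cast_le.mpr hk2) (Nat.floor_le hs0)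
    have := lam1_le ξ ρ τ hξ hρ hτ k
    have hkr : ξ * (k : ℝ) ^ 2 ≤ r := by
      have : (k:ℝ) ^ 2 ≤ s ^ 2 := by nlinarith [Nat.cast_nonneg (α := ℝ) k]
      rw [hs2] at this
      calc ξ * (k:ℝ)^2 ≤ ξ * (r / ξ) := by nlinarith
        _ = r := by field_simp
    linarith
  have hlow : ⌊s⌋₊ ≤ S.ncard := by
    calc ⌊s⌋₊ = (Set.Icc 1 ⌊s⌋₊).ncard := by
          rw [← Finset.coe_Icc, Set.ncard_coe_finset, Nat.card_Icc]; omega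
    _ ≤ S.ncard := Set.ncard_le_ncard hsub2 hfin
  have hhigh : S.ncard ≤ ⌊s + b⌋₊ := by
    calc S.ncard ≤ (Set.Icc 1 ⌊s + b⌋₊).ncard := Set.ncard_le_ncard hsub (Set.finite_Icc _ _)
    _ = ⌊s + b⌋₊ := by
          rw [← Finset.coe_Icc, Set.ncard_coe_finset, Nat.card_Icc]; omega
  constructor
  · rw [hsq]
    have h1 : s - 1 < (⌊s⌋₊ : ℝ) := Nat.sub_one_lt_floor s
    have h2 : (⌊s⌋₊ : ℝ) ≤ (S.ncard : ℝ) := Nat.cast_le.mpr hlow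
    linarith
  · rw [hsq]
    have h1 : (S.ncard : ℝ) ≤ (⌊s + b⌋₊ : ℝ) := Nat.cast_le.mpr hhigh
    have h2 : (⌊s + b⌋₊ : ℝ) ≤ s + b := Nat.floor_le (by linarith)
    linarith
end

section
/- For all positive reals ξ, ρ, τ and every r ≥ 0, the number n₂ of integers k ≥ 1 with λ_k^{(2)} ≤ r satisfies sqrt(r)/sqrt(ξ) − (1/(2sqrt(ξ)))(sqrt(ρ/τ) + sqrt((3ρ+4)/τ)) − 1 ≤ n₂ ≤ sqrt(r)/sqrt(ξ). -/
set_option maxHeartbeats 1000000 in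
theorem stmt_12 (ξ ρ τ : ℝ) (hξ : 0 < ξ) (hρ : 0 < ρ) (hτ : 0 < τ)
    (r : ℝ) (hr : 0 ≤ r) :
    Real.sqrt r / Real.sqrt ξ
        - (1 / (2 * Real.sqrt ξ)) * (Real.sqrt (ρ / τ) + Real.sqrt ((3 * ρ + 4) / τ)) - 1
        ≤ (({k : ℕ | 1 ≤ k ∧ lam2 ξ ρ τ k ≤ r}).ncard : ℝ) ∧
    (({k : ℕ | 1 ≤ k ∧ lam2 ξ ρ τ k ≤ r}).ncard : ℝ) ≤ Real.sqrt r / Real.sqrt ξ := by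
  set S := {k : ℕ | 1 ≤ k ∧ lam2 ξ ρ τ k ≤ r} with hS
  set s := Real.sqrt r with hsdef
  set e := Real.sqrt ξ with hedef
  set p := Real.sqrt (ρ / τ) with hpdef
  set g := Real.sqrt ((3 * ρ + 4) / τ) with hgdef
  have he0 : 0 < e := Real.sqrt_pos.mpr hξ
  have hs0 : 0 ≤ s := Real.sqrt_nonneg _
  have hp0 : 0 ≤ p := Real.sqrt_nonneg _
  have hg0 : 0 ≤ g := Real.sqrt_nonneg _
  have hs2 : s ^ 2 = r := Real.sq_sqrt hr
  have he2 : e ^ 2 = ξ := Real.sq_sqrt hξ.le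
  have hp2 : p ^ 2 = ρ / τ := Real.sq_sqrt (by positivity)
  have hg2 : g ^ 2 = (3 * ρ + 4) / τ := Real.sq_sqrt (by positivity)
  have hc0 : 0 < (ρ + 1) / (2 * τ) := by positivity
  -- upper bound part
  set M := Nat.floor (s / e) with hM
  have hsub : S ⊆ Set.Icc 1 M := by
    intro k hk
    obtain ⟨hk1, hk2⟩ := hk
    have hrk : 0 ≤ rk ξ ρ τ k := Real.sqrt_nonneg _
    have h1 : ξ * (k : ℝ) ^ 2 ≤ r := by
      have := hk2
      unfold lam2 at this
      nlinarith
    have hkx : (k : ℝ) ≤ s / e := by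
      rw [le_div_iff₀ he0]
      have h2 : ((k : ℝ) * e) ^ 2 ≤ s ^ 2 := by nlinarith [Nat.cast_nonneg (α := ℝ) k]
      have h3 : 0 ≤ (k : ℝ) * e := by positivity
      nlinarith
    exact ⟨hk1, Nat.le_floor hkx⟩
  have hSfin : S.Finite := (Set.finite_Icc 1 M).subset hsub
  have hub : (S.ncard : ℝ) ≤ s / e := by
    have h1 : S.ncard ≤ (Set.Icc 1 M).ncard := Set.ncard_le_ncard hsub (Set.finite_Icc 1 M)
    have h2 : (Set.Icc 1 M).ncard = M + 1 - 1 := by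
      rw [← Finset.coe_Icc, Set.ncard_coe_finset, Nat.card_Icc]
    have h3 : S.ncard ≤ M := by omega
    have h4 : (M : ℝ) ≤ s / e := Nat.floor_le (by positivity)
    calc (S.ncard : ℝ) ≤ (M : ℝ) := by exact_mod_cast h3
      _ ≤ s / e := h4
  refine ⟨?_, hub⟩
  -- lower bound
  set x := s / e - 1 / (2 * e) * (p + g) with hx
  set N := Nat.floor x with hN
  have hsub2 : Set.Icc 1 N ⊆ S := by
    intro k hk
    obtain ⟨hk1, hkN⟩ := hk
    have hx0 : 0 ≤ x := by
      by_contra h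
      push_neg at h
      have : N = 0 := Nat.floor_of_nonpos h.le
      omega
    have hkx : (k : ℝ) ≤ x := by
      calc (k : ℝ) ≤ (N : ℝ) := by exact_mod_cast hkN
        _ ≤ x := Nat.floor_le hx0
    have hk1' : (1 : ℝ) ≤ (k : ℝ) := by exact_mod_cast hk1
    refine ⟨hk1, ?_⟩
    -- key estimate
    set q := e * (k : ℝ) with hq
    have hq0 : 0 ≤ q := by positivity
    have hqe : e ≤ q := by nlinarith
    have hxe : e * x = s - (p + g) / 2 := by
      rw [hx]
      field_simp
    have hqs : q + (p + g) / 2 ≤ s := by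
      have h := mul_le_mul_of_nonneg_left hkx he0.le
      rw [hxe] at h
      linarith
    have hq2 : q ^ 2 = ξ * (k : ℝ) ^ 2 := by rw [hq, mul_pow, he2]
    have hrkb : rk ξ ρ τ k ≤ p * q + (ρ + 1) / (2 * τ) := by
      have hle : ξ * ρ / τ * (k : ℝ) ^ 2 + ((ρ + 1) / (2 * τ)) ^ 2
          ≤ (p * q + (ρ + 1) / (2 * τ)) ^ 2 := by
        have hpq0 : 0 ≤ p * q := mul_nonneg hp0 hq0
        have hid : p ^ 2 * q ^ 2 = ξ * ρ / τ * (k : ℝ) ^ 2 := by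
          rw [hp2, hq2]; ring
        nlinarith [hid, hpq0, hc0]
      have h1 : rk ξ ρ τ k ≤ Real.sqrt ((p * q + (ρ + 1) / (2 * τ)) ^ 2) :=
        Real.sqrt_le_sqrt hle
      rwa [Real.sqrt_sq (by positivity)] at h1
    unfold lam2
    have hsβ : (p + g) / 2 ≤ s := by nlinarith
    have key : q ^ 2 + p * q + (ρ + 1) / τ ≤ s ^ 2 := by
      have h8 : p ^ 2 + g ^ 2 = 4 * ((ρ + 1) / τ) := by
        rw [hp2, hg2]; field_simp; ring
      nlinarith [mul_nonneg hg0 hq0, mul_nonneg hp0 hg0, sq_nonneg (s - q - (p + g) / 2)]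
    have h2c : (ρ + 1) / τ = 2 * ((ρ + 1) / (2 * τ)) := by
      field_simp
    linarith [hrkb, hq2, key, hs2]
  have hlb : (N : ℝ) ≤ (S.ncard : ℝ) := by
    have h1 : (Set.Icc 1 N).ncard ≤ S.ncard := Set.ncard_le_ncard hsub2 hSfin
    have h2 : (Set.Icc 1 N).ncard = N + 1 - 1 := by
      rw [← Finset.coe_Icc, Set.ncard_coe_finset, Nat.card_Icc]
    have : N ≤ S.ncard := by omega
    exact_mod_cast this
  have h5 : x - 1 < (N : ℝ) := Nat.sub_one_lt_floor x
  have : s / e - 1 / (2 * e) * (p + g) - 1 = x - 1 := by rw [hx]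
  linarith
end

section
/- For all positive reals ξ, ρ, τ, there exist constants p = 2/sqrt(ξ) and α > 0 (depending only on ξ, ρ, τ) such that the counting function N(r) = #{(k,i) : k ≥ 1, i ∈ {1,2}, λ_k^{(i)} ≤ r} satisfies |p·sqrt(r) − N(r)| ≤ α for all r > 0. -/
/-- The counting function: number of eigenvalues (with index multiplicity) that are `≤ r`. -/
noncomputable def countFn (ξ ρ τ : ℝ) (r : ℝ) : ℕ :=
  ({k : ℕ | 1 ≤ k ∧ lam1 ξ ρ τ k ≤ r}).ncard + ({k : ℕ | 1 ≤ k ∧ lam2 ξ ρ τ k ≤ r}).ncard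

lemma aux_set_eq (t : ℝ) :
    {k : ℕ | 1 ≤ k ∧ (k : ℝ) ≤ t} = ↑(Finset.Icc 1 ⌊t⌋₊) := by
  ext k
  simp only [Set.mem_setOf_eq, Finset.coe_Icc, Set.mem_Icc]
  constructor
  · rintro ⟨h1, h2⟩; exact ⟨h1, Nat.le_floor h2⟩
  · rintro ⟨h1, h2⟩
    have ht : 0 ≤ t := by
      by_contra h
      push_neg at h
      rw [Nat.floor_of_nonpos h.le] at h2
      omega
    exact ⟨h1, le_trans (by exact_mod_cast Nat.cast_le.mpr h2) (Nat.floor_le ht)⟩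

lemma aux_ncard (t : ℝ) : {k : ℕ | 1 ≤ k ∧ (k : ℝ) ≤ t}.ncard = ⌊t⌋₊ := by
  rw [aux_set_eq, Set.ncard_coe_finset, Nat.card_Icc]
  omega

lemma aux_finite (t : ℝ) : {k : ℕ | 1 ≤ k ∧ (k : ℝ) ≤ t}.Finite := by
  rw [aux_set_eq]; exact (Finset.Icc 1 ⌊t⌋₊).finite_toSet

lemma rk_ge (ξ ρ τ : ℝ) (hξ : 0 < ξ) (hρ : 0 < ρ) (hτ : 0 < τ) (k : ℕ) :
    (ρ + 1) / (2 * τ) ≤ rk ξ ρ τ k := by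
  have hc : 0 ≤ (ρ + 1) / (2 * τ) := by positivity
  rw [rk]
  calc (ρ + 1) / (2 * τ) = Real.sqrt (((ρ + 1) / (2 * τ)) ^ 2) := (Real.sqrt_sq hc).symm
    _ ≤ _ := Real.sqrt_le_sqrt (by
        have ha : (0:ℝ) ≤ ξ * ρ / τ := by positivity
        nlinarith [mul_nonneg ha (sq_nonneg ((k : ℝ)))])

lemma rk_le (ξ ρ τ : ℝ) (hξ : 0 < ξ) (hρ : 0 < ρ) (hτ : 0 < τ) (k : ℕ) :
    rk ξ ρ τ k ≤ Real.sqrt (ξ * ρ / τ) * k + (ρ + 1) / (2 * τ) := by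
  have hc : 0 ≤ (ρ + 1) / (2 * τ) := by positivity
  have ha : 0 ≤ ξ * ρ / τ := by positivity
  have hs2 : Real.sqrt (ξ * ρ / τ) ^ 2 = ξ * ρ / τ := Real.sq_sqrt ha
  have hk : (0 : ℝ) ≤ (k : ℝ) := Nat.cast_nonneg k
  rw [rk]
  calc Real.sqrt (ξ * ρ / τ * (k : ℝ) ^ 2 + ((ρ + 1) / (2 * τ)) ^ 2)
      ≤ Real.sqrt ((Real.sqrt (ξ * ρ / τ) * k + (ρ + 1) / (2 * τ)) ^ 2) := by
        apply Real.sqrt_le_sqrt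
        nlinarith [mul_nonneg (mul_nonneg (Real.sqrt_nonneg (ξ * ρ / τ)) hk) hc]
    _ = _ := Real.sqrt_sq (by positivity)

theorem stmt_13 (ξ ρ τ : ℝ) (hξ : 0 < ξ) (hρ : 0 < ρ) (hτ : 0 < τ) :
    ∃ α : ℝ, 0 < α ∧ ∀ r : ℝ, 0 < r →
      |(2 / Real.sqrt ξ) * Real.sqrt r - (countFn ξ ρ τ r : ℝ)| ≤ α := by
  have hc : 0 < (ρ + 1) / (2 * τ) := by positivity
  have ha : (0 : ℝ) ≤ ξ * ρ / τ := by positivity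
  set c := (ρ + 1) / (2 * τ) with hcdef
  set sa := Real.sqrt (ξ * ρ / τ) with hsadef
  have hsa : 0 ≤ sa := Real.sqrt_nonneg _
  set m := sa / ξ with hmdef
  set B := (sa + 2 * c) / ξ with hBdef
  have hm : 0 ≤ m := by positivity
  have hB : 0 ≤ B := by positivity
  have hsam : sa = ξ * m := by rw [hmdef]; field_simp
  have hξB : ξ * B = sa + 2 * c := by rw [hBdef]; field_simp
  refine ⟨B + m + 2, by positivity, ?_⟩
  intro r hr
  set s := Real.sqrt (r / ξ) with hsdef
  have hs : 0 < s := Real.sqrt_pos.mpr (by positivity)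
  have hs2 : ξ * s ^ 2 = r := by
    rw [hsdef, Real.sq_sqrt (by positivity : (0:ℝ) ≤ r / ξ)]
    field_simp
  have hsr : 2 / Real.sqrt ξ * Real.sqrt r = 2 * s := by
    rw [hsdef, Real.sqrt_div hr.le]
    ring
  -- lam bounds
  have hlam1_le : ∀ k : ℕ, lam1 ξ ρ τ k ≤ ξ * (k : ℝ) ^ 2 := by
    intro k
    have := rk_ge ξ ρ τ hξ hρ hτ k
    rw [lam1, ← hcdef]; linarith
  have hlam1_ge : ∀ k : ℕ, ξ * (k : ℝ) ^ 2 - sa * k ≤ lam1 ξ ρ τ k := by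
    intro k
    have := rk_le ξ ρ τ hξ hρ hτ k
    rw [lam1, ← hcdef]; linarith
  have hlam2_ge : ∀ k : ℕ, ξ * (k : ℝ) ^ 2 ≤ lam2 ξ ρ τ k := by
    intro k
    have h1 := rk_ge ξ ρ τ hξ hρ hτ k
    rw [lam2, ← hcdef]; linarith
  have hlam2_le : ∀ k : ℕ, lam2 ξ ρ τ k ≤ ξ * (k : ℝ) ^ 2 + sa * k + 2 * c := by
    intro k
    have := rk_le ξ ρ τ hξ hρ hτ k
    rw [lam2, ← hcdef]; linarith
  -- set inclusions
  have hA1 : {k : ℕ | 1 ≤ k ∧ (k : ℝ) ≤ s} ⊆ {k : ℕ | 1 ≤ k ∧ lam1 ξ ρ τ k ≤ r} := by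
    rintro k ⟨h1, h2⟩
    have hk : (0 : ℝ) ≤ (k : ℝ) := Nat.cast_nonneg k
    refine ⟨h1, (hlam1_le k).trans ?_⟩
    nlinarith [mul_nonneg hξ.le (mul_nonneg (by linarith : (0:ℝ) ≤ s - (k:ℝ)) (by linarith : (0:ℝ) ≤ s + (k:ℝ)))]
  have hB1 : {k : ℕ | 1 ≤ k ∧ lam1 ξ ρ τ k ≤ r} ⊆ {k : ℕ | 1 ≤ k ∧ (k : ℝ) ≤ s + m} := by
    rintro k ⟨h1, h2⟩
    refine ⟨h1, ?_⟩
    by_contra hk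
    push_neg at hk
    have hge := hlam1_ge k
    have hprod : 0 < ((k : ℝ) - s - m) * ((k : ℝ) + s) :=
      mul_pos (by linarith) (by positivity)
    nlinarith [mul_nonneg hm hs.le]
  have hB2 : {k : ℕ | 1 ≤ k ∧ lam2 ξ ρ τ k ≤ r} ⊆ {k : ℕ | 1 ≤ k ∧ (k : ℝ) ≤ s} := by
    rintro k ⟨h1, h2⟩
    refine ⟨h1, ?_⟩
    by_contra hk
    push_neg at hk
    have hge := hlam2_ge k
    have hk0 : (0:ℝ) ≤ (k:ℝ) := Nat.cast_nonneg k
    nlinarith [mul_pos hξ (mul_pos (by linarith : (0:ℝ) < (k:ℝ) - s) (by linarith : (0:ℝ) < (k:ℝ) + s))]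
  have hA2 : {k : ℕ | 1 ≤ k ∧ (k : ℝ) ≤ s - B} ⊆ {k : ℕ | 1 ≤ k ∧ lam2 ξ ρ τ k ≤ r} := by
    rintro k ⟨h1, h2⟩
    have hk : (1 : ℝ) ≤ (k : ℝ) := by exact_mod_cast h1
    refine ⟨h1, (hlam2_le k).trans ?_⟩
    nlinarith [mul_nonneg (by linarith : (0:ℝ) ≤ s - (k:ℝ) - B) (by linarith : (0:ℝ) ≤ (k:ℝ)),
      mul_nonneg (by linarith : (0:ℝ) ≤ s - (k:ℝ)) hs.le,
      mul_nonneg hc.le (by linarith : (0:ℝ) ≤ (k:ℝ) - 1)]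
  -- count bounds
  have hc1u : ({k : ℕ | 1 ≤ k ∧ lam1 ξ ρ τ k ≤ r}).ncard ≤ ⌊s + m⌋₊ := by
    rw [← aux_ncard (s + m)]
    exact Set.ncard_le_ncard hB1 (aux_finite _)
  have hc1l : ⌊s⌋₊ ≤ ({k : ℕ | 1 ≤ k ∧ lam1 ξ ρ τ k ≤ r}).ncard := by
    rw [← aux_ncard s]
    exact Set.ncard_le_ncard hA1 ((aux_finite (s + m)).subset hB1)
  have hc2u : ({k : ℕ | 1 ≤ k ∧ lam2 ξ ρ τ k ≤ r}).ncard ≤ ⌊s⌋₊ := by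
    rw [← aux_ncard s]
    exact Set.ncard_le_ncard hB2 (aux_finite _)
  have hc2l : ⌊s - B⌋₊ ≤ ({k : ℕ | 1 ≤ k ∧ lam2 ξ ρ τ k ≤ r}).ncard := by
    rw [← aux_ncard (s - B)]
    exact Set.ncard_le_ncard hA2 ((aux_finite s).subset hB2)
  -- floor bounds
  have fl1 : (⌊s⌋₊ : ℝ) ≤ s := Nat.floor_le hs.le
  have fl2 : s - 1 < (⌊s⌋₊ : ℝ) := Nat.sub_one_lt_floor s
  have fl3 : (⌊s + m⌋₊ : ℝ) ≤ s + m := Nat.floor_le (by positivity)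
  have fl4 : s - B - 1 < (⌊s - B⌋₊ : ℝ) := Nat.sub_one_lt_floor (s - B)
  rw [countFn, hsr]
  have h1 : ((⌊s⌋₊ : ℝ) + (⌊s - B⌋₊ : ℝ)) ≤
      (({k : ℕ | 1 ≤ k ∧ lam1 ξ ρ τ k ≤ r}).ncard + ({k : ℕ | 1 ≤ k ∧ lam2 ξ ρ τ k ≤ r}).ncard : ℕ) := by
    push_cast
    have := Nat.cast_le (α := ℝ) |>.mpr hc1l
    have := Nat.cast_le (α := ℝ) |>.mpr hc2l
    push_cast at *
    linarith
  have h2 : ((({k : ℕ | 1 ≤ k ∧ lam1 ξ ρ τ k ≤ r}).ncard + ({k : ℕ | 1 ≤ k ∧ lam2 ξ ρ τ k ≤ r}).ncard : ℕ) : ℝ) ≤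
      (⌊s + m⌋₊ : ℝ) + (⌊s⌋₊ : ℝ) := by
    have := Nat.cast_le (α := ℝ) |>.mpr hc1u
    have := Nat.cast_le (α := ℝ) |>.mpr hc2u
    push_cast at *
    linarith
  rw [abs_le]
  constructor <;> [skip; skip] <;> push_cast at h1 h2 ⊢ <;> linarith
end
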